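/- For any g ∈ GL_d(R) with singular values σ_1 ≥ ... ≥ σ_d and any nonzero x ∈ R^d, one has σ_r(g)·∠(x̄, V_g^-) ≤ ‖gx‖/‖x‖ ≤ σ_1(g)·∠(x̄, V_g^-) + σ_{r+1}(g). -/

import Mathlib

noncomputable section

abbrev Euc (d : ℕ) := EuclideanSpace ℝ (Fin d)

/-- `∠(x̄, W) = ‖π_{W^⊥}(x)‖ / ‖x‖`, the sine of the angle between the line `ℝx` and `W`. -/
def angLine {d : ℕ} (x : Euc d) (W : Submodule ℝ (Euc d)) : ℝ :=
  ‖(Wᗮ.orthogonalProjectionOnto x : Euc d)‖ / ‖x‖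

/-- The span of the standard basis vectors `e_i` of `ℝ^d` with `r ≤ i`. -/
def stdSpanGE (d r : ℕ) : Submodule ℝ (Euc d) :=
  Submodule.span ℝ ((fun i => EuclideanSpace.single i (1 : ℝ)) '' {i : Fin d | r ≤ (i : ℕ)})

def truncLT (d r : ℕ) (y : Euc d) : Euc d :=
  (WithLp.equiv 2 (Fin d → ℝ)).symm (fun i => if (i : ℕ) < r then y i else 0)

@[simp] lemma truncLT_apply (d r : ℕ) (y : Euc d) (i : Fin d) :
    truncLT d r y i = if (i : ℕ) < r then y i else 0 := rfl

lemma truncLT_mem_orthogonal (d r : ℕ) (y : Euc d) :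
    truncLT d r y ∈ (stdSpanGE d r)ᗮ := by
  rw [Submodule.mem_orthogonal]
  intro u hu
  induction hu using Submodule.span_induction with
  | mem u hu =>
      obtain ⟨i, hi, rfl⟩ := hu
      simp only [Set.mem_setOf_eq] at hi
      rw [EuclideanSpace.inner_single_left]
      simp only [map_one, one_mul, truncLT_apply]
      rw [if_neg (by omega)]
  | zero => simp
  | add u v _ _ hu hv => rw [inner_add_left, hu, hv, add_zero]
  | smul c u _ hu => rw [inner_smul_left, hu, mul_zero]

lemma sub_truncLT_mem (d r : ℕ) (y : Euc d) :
    y - truncLT d r y ∈ stdSpanGE d r := by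
  have key : y - truncLT d r y =
      ∑ i ∈ Finset.univ.filter (fun i : Fin d => r ≤ (i : ℕ)),
        y i • EuclideanSpace.single i (1 : ℝ) := by
    ext j
    have hsum : (∑ i ∈ Finset.univ.filter (fun i : Fin d => r ≤ (i : ℕ)),
          y i • EuclideanSpace.single i (1 : ℝ)) j
        = ∑ i ∈ Finset.univ.filter (fun i : Fin d => r ≤ (i : ℕ)),
            (y i • EuclideanSpace.single i (1 : ℝ)) j := by
      exact map_sum (EuclideanSpace.projₗ (𝕜 := ℝ) j)
        (fun i => y i • EuclideanSpace.single i (1 : ℝ))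
        (Finset.univ.filter (fun i : Fin d => r ≤ (i : ℕ)))
    rw [PiLp.sub_apply, truncLT_apply, hsum]
    simp only [PiLp.smul_apply, EuclideanSpace.single_apply, smul_eq_mul,
      mul_ite, mul_one, mul_zero]
    rw [Finset.sum_ite_eq (Finset.univ.filter (fun i : Fin d => r ≤ (i : ℕ))) j y]
    simp only [Finset.mem_filter, Finset.mem_univ, true_and]
    by_cases h : (j : ℕ) < r
    · rw [if_pos h, if_neg (by omega), sub_self]
    · rw [if_neg h, if_pos (by omega), sub_zero]
  rw [key]
  exact Submodule.sum_mem _ fun i hi => Submodule.smul_mem _ _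
    (Submodule.subset_span ⟨i, by simpa using hi, rfl⟩)

lemma proj_eq (d r : ℕ) (y : Euc d) :
    ((stdSpanGE d r)ᗮ.orthogonalProjectionOnto y : Euc d) = truncLT d r y :=
  (Submodule.starProjection_apply _ _).symm.trans <|
  Submodule.eq_starProjection_of_mem_orthogonal (truncLT_mem_orthogonal d r y)
    (Submodule.le_orthogonal_orthogonal _ (sub_truncLT_mem d r y))

lemma map_orthogonal {d : ℕ} (f : Euc d ≃ₗᵢ[ℝ] Euc d) (p : Submodule ℝ (Euc d)) :
    (p.map (f.toLinearEquiv : Euc d →ₗ[ℝ] Euc d))ᗮ =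
      pᗮ.map (f.toLinearEquiv : Euc d →ₗ[ℝ] Euc d) := by
  ext v
  simp only [Submodule.mem_orthogonal, Submodule.mem_map,
    LinearIsometryEquiv.coe_toLinearEquiv]
  constructor
  · intro h
    refine ⟨f.symm v, fun u hu => ?_, by simp⟩
    have := h (f u) ⟨u, hu, rfl⟩
    rwa [← f.apply_symm_apply v, f.inner_map_map] at this
  · rintro ⟨w, hw, rfl⟩ u ⟨t, ht, rfl⟩
    have h0 : (inner ℝ (f t) (f w) : ℝ) = 0 := by rw [f.inner_map_map]; exact hw t ht
    simpa using h0

lemma norm_le_norm_pw {d : ℕ} (v w : Euc d) (h : ∀ i, |v i| ≤ |w i|) : ‖v‖ ≤ ‖w‖ := by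
  rw [EuclideanSpace.norm_eq, EuclideanSpace.norm_eq]
  apply Real.sqrt_le_sqrt
  apply Finset.sum_le_sum
  intro i _
  rw [Real.norm_eq_abs, Real.norm_eq_abs]
  exact pow_le_pow_left₀ (abs_nonneg _) (h i) 2

theorem stmt2 {d r : ℕ} (hr : 0 < r) (hrd : r < d)
    (g : Euc d →ₗ[ℝ] Euc d) (hg : Function.Bijective g)
    -- Cartan decomposition `g = k ∘ diag σ ∘ l` with `σ_1 ≥ ... ≥ σ_d > 0`
    (k l : Euc d ≃ₗᵢ[ℝ] Euc d) (σ : Fin d → ℝ) (hσmono : Antitone σ) (hσpos : ∀ i, 0 < σ i)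
    (hcartan : ∀ x : Euc d, ∀ i : Fin d, k.symm (g x) i = σ i * l x i)
    (x : Euc d) (hx : x ≠ 0) :
    σ ⟨r - 1, by omega⟩ *
        angLine x ((stdSpanGE d r).map (l.symm.toLinearEquiv : Euc d →ₗ[ℝ] Euc d)) ≤
      ‖g x‖ / ‖x‖ ∧
    ‖g x‖ / ‖x‖ ≤
      σ ⟨0, by omega⟩ *
          angLine x ((stdSpanGE d r).map (l.symm.toLinearEquiv : Euc d →ₗ[ℝ] Euc d)) +
        σ ⟨r, hrd⟩ := by
  have hxn : (0:ℝ) < ‖x‖ := norm_pos_iff.mpr hx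
  set y : Euc d := l x with hy
  set z : Euc d := k.symm (g x) with hzdef
  have hz : ∀ i, z i = σ i * y i := fun i => hcartan x i
  have hzy : ‖g x‖ = ‖z‖ := (k.symm.norm_map (g x)).symm
  have hyx : ‖y‖ = ‖x‖ := l.norm_map x
  -- angle computation
  have hang : angLine x ((stdSpanGE d r).map (l.symm.toLinearEquiv : Euc d →ₗ[ℝ] Euc d))
      = ‖truncLT d r y‖ / ‖x‖ := by
    rw [angLine, ← Submodule.starProjection_apply]
    simp only [map_orthogonal l.symm (stdSpanGE d r)]
    rw [Submodule.starProjection_map_apply, LinearIsometryEquiv.norm_map,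
      LinearIsometryEquiv.symm_symm, Submodule.starProjection_apply, proj_eq]
  set A : ℝ := ‖truncLT d r y‖ with hA
  -- lower bound
  have h1 : σ ⟨r - 1, by omega⟩ * A ≤ ‖z‖ := by
    calc σ ⟨r - 1, by omega⟩ * A = ‖σ ⟨r - 1, by omega⟩ • truncLT d r y‖ := by
          rw [norm_smul, Real.norm_eq_abs, abs_of_pos (hσpos _)]
      _ ≤ ‖z‖ := by
          apply norm_le_norm_pw
          intro i
          rw [PiLp.smul_apply, truncLT_apply, hz i, smul_eq_mul]
          by_cases h : (i : ℕ) < r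
          · rw [if_pos h, abs_mul, abs_mul]
            apply mul_le_mul_of_nonneg_right _ (abs_nonneg _)
            rw [abs_of_pos (hσpos _), abs_of_pos (hσpos _)]
            exact hσmono (show i ≤ ⟨r - 1, by omega⟩ from
              show (i : ℕ) ≤ r - 1 by omega)
          · rw [if_neg h, mul_zero, abs_zero]
            exact abs_nonneg _
  -- upper bound pieces
  have h2a : ‖truncLT d r z‖ ≤ σ ⟨0, by omega⟩ * A := by
    calc ‖truncLT d r z‖ ≤ ‖σ ⟨0, by omega⟩ • truncLT d r y‖ := by
          apply norm_le_norm_pw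
          intro i
          rw [PiLp.smul_apply, truncLT_apply, truncLT_apply, smul_eq_mul]
          by_cases h : (i : ℕ) < r
          · rw [if_pos h, if_pos h, hz i, abs_mul, abs_mul]
            apply mul_le_mul_of_nonneg_right _ (abs_nonneg _)
            rw [abs_of_pos (hσpos _), abs_of_pos (hσpos _)]
            exact hσmono (show (⟨0, by omega⟩ : Fin d) ≤ i from
              show 0 ≤ (i : ℕ) from Nat.zero_le _)
          · rw [if_neg h, if_neg h, mul_zero]
      _ = σ ⟨0, by omega⟩ * A := by
          rw [norm_smul, Real.norm_eq_abs, abs_of_pos (hσpos _)]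
  have h2b : ‖z - truncLT d r z‖ ≤ σ ⟨r, hrd⟩ * ‖y‖ := by
    calc ‖z - truncLT d r z‖ ≤ ‖σ ⟨r, hrd⟩ • y‖ := by
          apply norm_le_norm_pw
          intro i
          rw [PiLp.sub_apply, truncLT_apply, PiLp.smul_apply, smul_eq_mul]
          by_cases h : (i : ℕ) < r
          · rw [if_pos h, sub_self, abs_zero]
            exact abs_nonneg _
          · rw [if_neg h, sub_zero, hz i, abs_mul, abs_mul]
            apply mul_le_mul_of_nonneg_right _ (abs_nonneg _)
            rw [abs_of_pos (hσpos _), abs_of_pos (hσpos _)]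
            exact hσmono (show (⟨r, hrd⟩ : Fin d) ≤ i from
              show r ≤ (i : ℕ) by omega)
      _ = σ ⟨r, hrd⟩ * ‖y‖ := by
          rw [norm_smul, Real.norm_eq_abs, abs_of_pos (hσpos _)]
  have h2 : ‖z‖ ≤ σ ⟨0, by omega⟩ * A + σ ⟨r, hrd⟩ * ‖y‖ := by
    calc ‖z‖ = ‖truncLT d r z + (z - truncLT d r z)‖ := by rw [add_sub_cancel]
      _ ≤ ‖truncLT d r z‖ + ‖z - truncLT d r z‖ := norm_add_le _ _
      _ ≤ σ ⟨0, by omega⟩ * A + σ ⟨r, hrd⟩ * ‖y‖ := add_le_add h2a h2b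
  rw [hang, hzy]
  constructor
  · rw [← mul_div_assoc]
    gcongr
  · rw [← mul_div_assoc, div_add' _ _ _ (ne_of_gt hxn), div_le_div_iff₀ hxn hxn]
    have : σ ⟨r, hrd⟩ * ‖y‖ = σ ⟨r, hrd⟩ * ‖x‖ := by rw [hyx]
    nlinarith [h2, hxn]
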